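/- Let (g̃,∇̃) be the conformal-projective transformation of (g,∇) by smooth functions φ,ψ, and let η be a 1-form on M. Then (M,g,η,∇) is a semi-Weyl manifold admitting torsion if and only if (M,g̃,η,∇̃) is a semi-Weyl manifold admitting torsion. Moreover, the semi-dual connection ∇̃*_{(g̃,η)} of ∇̃ with respect to (g̃,η) and the semi-dual connection ∇*_{(g,η)} of ∇ with respect to (g,η) satisfy ∇̃*_{(g̃,η)}=∇*_{(g,η)}+dψ⊗I+I⊗dψ−g⊗∇φ. -/

import Mathlib

/-!
We work in a concrete model of a pseudo-Riemannian manifold: the manifold `M` is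
(an open chart of) a real normed space `E`, vector fields are maps `E → E`,
smooth functions are maps `E → ℝ`, a (pseudo-Riemannian) metric is a field of
symmetric non-degenerate bilinear forms `g : E → E →ₗ[ℝ] E →ₗ[ℝ] ℝ`, a `1`-form
is a field of linear forms `η : E → E →ₗ[ℝ] ℝ`, and an affine connection is an
operation `D : (E → E) → (E → E) → (E → E)` on vector fields which is
function-linear in the first argument and a derivation in the second one.
-/

open scoped BigOperators

noncomputable section

variable {E : Type*} [NormedAddCommGroup E] [NormedSpace ℝ E]

/-- The derivative `X(f)` of a function `f` along a vector field `X`. -/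
def dirD (f : E → ℝ) (X : E → E) : E → ℝ := fun x => fderiv ℝ f x (X x)

/-- The Lie bracket `[X, Y]` of two vector fields. -/
def lieB (X Y : E → E) : E → E := fun x => fderiv ℝ Y x (X x) - fderiv ℝ X x (Y x)

/-- The torsion tensor `T^∇(X,Y) = ∇_X Y − ∇_Y X − [X,Y]` of an affine connection. -/
def tors (D : (E → E) → (E → E) → (E → E)) (X Y : E → E) : E → E :=
  fun x => D X Y x - D Y X x - lieB X Y x

/-- The curvature tensor `R^∇(X,Y)Z = ∇_X∇_Y Z − ∇_Y∇_X Z − ∇_{[X,Y]}Z`. -/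
def curv (D : (E → E) → (E → E) → (E → E)) (X Y Z : E → E) : E → E :=
  fun x => D X (D Y Z) x - D Y (D X Z) x - D (lieB X Y) Z x

/-- The covariant derivative `(∇_X g)(Y, Z)` of the metric `g`. -/
def covg (g : E → E →ₗ[ℝ] E →ₗ[ℝ] ℝ) (D : (E → E) → (E → E) → (E → E))
    (X Y Z : E → E) : E → ℝ :=
  fun x => fderiv ℝ (fun y => g y (Y y) (Z y)) x (X x)
    - g x (D X Y x) (Z x) - g x (Y x) (D X Z x)

/-- `g` is a pseudo-Riemannian metric: a symmetric non-degenerate bilinear form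
at every point. -/
def IsMetric (g : E → E →ₗ[ℝ] E →ₗ[ℝ] ℝ) : Prop :=
  (∀ x u v, g x u v = g x v u) ∧ ∀ x u, (∀ v, g x u v = 0) → u = 0

/-- `D` is an affine connection on vector fields. -/
def IsConn (D : (E → E) → (E → E) → (E → E)) : Prop :=
  (∀ X Y Z, D (fun x => X x + Y x) Z = fun x => D X Z x + D Y Z x) ∧
  (∀ (f : E → ℝ) (X Y), D (fun x => f x • X x) Y = fun x => f x • D X Y x) ∧
  (∀ X Y Z, D X (fun x => Y x + Z x) = fun x => D X Y x + D X Z x) ∧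
  (∀ (f : E → ℝ) (X Y), D X (fun x => f x • Y x)
      = fun x => dirD f X x • Y x + f x • D X Y x)

/-- The connection `D` is flat: its curvature tensor vanishes identically. -/
def FlatConn (D : (E → E) → (E → E) → (E → E)) : Prop := ∀ X Y Z x, curv D X Y Z x = 0

/-- The connection `D` is torsion-free: its torsion tensor vanishes identically. -/
def TorsFree (D : (E → E) → (E → E) → (E → E)) : Prop := ∀ X Y x, tors D X Y x = 0

/-- `(M, g, ∇)` is a statistical manifold admitting torsion (SMT):
`(∇_X g)(Y,Z) = (∇_Y g)(X,Z) − g(T^∇(X,Y),Z)`. -/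
def IsSMT (g : E → E →ₗ[ℝ] E →ₗ[ℝ] ℝ) (D : (E → E) → (E → E) → (E → E)) : Prop :=
  ∀ X Y Z x, covg g D X Y Z x = covg g D Y X Z x - g x (tors D X Y x) (Z x)

/-- `(M, g, η, ∇)` is a semi-Weyl manifold admitting torsion (SWMT):
`(∇_X g)(Y,Z) + η(X)g(Y,Z) = (∇_Y g)(X,Z) + η(Y)g(X,Z) − g(T^∇(X,Y),Z)`. -/
def IsSWMT (g : E → E →ₗ[ℝ] E →ₗ[ℝ] ℝ) (η : E → E →ₗ[ℝ] ℝ)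
    (D : (E → E) → (E → E) → (E → E)) : Prop :=
  ∀ X Y Z x, covg g D X Y Z x + η x (X x) * g x (Y x) (Z x)
    = covg g D Y X Z x + η x (Y x) * g x (X x) (Z x) - g x (tors D X Y x) (Z x)

/-- `D` and `Ds` are dual connections with respect to `g`:
`X(g(Y,Z)) = g(∇_X Y, Z) + g(Y, ∇*_X Z)`. -/
def DualConn (g : E → E →ₗ[ℝ] E →ₗ[ℝ] ℝ) (D Ds : (E → E) → (E → E) → (E → E)) : Prop :=
  ∀ X Y Z x, fderiv ℝ (fun y => g y (Y y) (Z y)) x (X x)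
    = g x (D X Y x) (Z x) + g x (Y x) (Ds X Z x)

/-- `D` and `Ds` are semi-dual connections with respect to `(g, η)`:
`X(g(Y,Z)) = g(∇_X Y, Z) + g(Y, ∇*_X Z) − η(X)g(Y,Z)`. -/
def SemiDualConn (g : E → E →ₗ[ℝ] E →ₗ[ℝ] ℝ) (η : E → E →ₗ[ℝ] ℝ)
    (D Ds : (E → E) → (E → E) → (E → E)) : Prop :=
  ∀ X Y Z x, fderiv ℝ (fun y => g y (Y y) (Z y)) x (X x)
    = g x (D X Y x) (Z x) + g x (Y x) (Ds X Z x) - η x (X x) * g x (Y x) (Z x)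

/-- The Ricci tensor `Ric(Y,Z) = Σᵢ εᵢ g(R(Eᵢ,Y)Z, Eᵢ)` of a connection, computed
via a `g`-orthonormal frame `Efr` with signs `eps`. -/
def ricci (g : E → E →ₗ[ℝ] E →ₗ[ℝ] ℝ) (D : (E → E) → (E → E) → (E → E))
    {n : ℕ} (Efr : Fin n → E → E) (eps : Fin n → ℝ) (Y Z : E → E) : E → ℝ :=
  fun x => ∑ i, eps i * g x (curv D (Efr i) Y Z x) (Efr i x)

/-- `trace (T_Y) = Σᵢ εᵢ g(T^∇(Eᵢ,Y), Eᵢ)`, the trace of `X ↦ T^∇(X,Y)`. -/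
def trTor (g : E → E →ₗ[ℝ] E →ₗ[ℝ] ℝ) (D : (E → E) → (E → E) → (E → E))
    {n : ℕ} (Efr : Fin n → E → E) (eps : Fin n → ℝ) (Y : E → E) : E → ℝ :=
  fun x => ∑ i, eps i * g x (tors D (Efr i) Y x) (Efr i x)

/-- A vector field is tangent to the submanifold determined by the field of
(tangential) projections `P`. -/
def Tang (P : E → E →ₗ[ℝ] E) (X : E → E) : Prop := ∀ x, P x (X x) = X x

/-- The projection of a vector field tangent to a lightlike hypersurface onto the
screen distribution, `P X = X − g(X,N)ξ`. -/
def scrP (g : E → E →ₗ[ℝ] E →ₗ[ℝ] ℝ) (ξ N : E → E) (X : E → E) : E → E :=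
  fun x => X x - g x (X x) (N x) • ξ x

/-- The induced connection on sections of the screen distribution of a lightlike
hypersurface: the `S(TM')`-component of `∇_X Y` in `TM = S(TM') ⊕ Rad(TM') ⊕ tr(TM')`. -/
def scrConn (g : E → E →ₗ[ℝ] E →ₗ[ℝ] ℝ) (ξ N : E → E)
    (D : (E → E) → (E → E) → (E → E)) : (E → E) → (E → E) → (E → E) :=
  fun X Y x => D X Y x - g x (D X Y x) (N x) • ξ x - g x (D X Y x) (ξ x) • N x

end

section AuxLemmas

variable {E : Type*} [NormedAddCommGroup E] [NormedSpace ℝ E]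

private lemma aux_vanish (g : E → E →ₗ[ℝ] E →ₗ[ℝ] ℝ) (η : E → E →ₗ[ℝ] ℝ)
    (D Dse : (E → E) → (E → E) → (E → E))
    (hLeib : ∀ (f : E → ℝ) (X Y), D X (fun x => f x • Y x)
      = fun x => dirD f X x • Y x + f x • D X Y x)
    (hsd : SemiDualConn g η D Dse) (Y Z : E → E) (x : E)
    (hnd : ¬ DifferentiableAt ℝ (fun y => g y (Y y) (Z y)) x) :
    g x (Y x) (Z x) = 0 := by
  set h : E → ℝ := fun y => g y (Y y) (Z y) with hh
  have hnt : Nontrivial E := by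
    by_contra hns
    have hsub : Subsingleton E := not_nontrivial_iff_subsingleton.mp hns
    apply hnd
    have : h = fun _ => g x (Y x) (Z x) := funext fun y => by rw [Subsingleton.elim y x]
    rw [this]
    exact differentiableAt_const _
  obtain ⟨u0, hu0⟩ := exists_ne (0 : E)
  obtain ⟨L, -, hL⟩ := exists_dual_vector ℝ u0 (norm_ne_zero_iff.mpr hu0)
  set f : E → ℝ := fun y => 1 + (L y - L x) with hf
  have hfx : f x = 1 := by simp [hf]
  have hfd : DifferentiableAt ℝ f x := by
    apply (differentiableAt_const (1:ℝ)).add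
    exact (L.differentiable.differentiableAt).sub (differentiableAt_const _)
  have hfderiv : fderiv ℝ f x = (L : E →L[ℝ] ℝ) := by
    rw [hf]
    have : (fun y => 1 + (L y - L x)) = fun y => (1 - L x) + L y := by
      funext y; ring
    rw [this, fderiv_const_add, L.fderiv]
  -- key identity
  have hkey : ∀ u : E, fderiv ℝ (fun y => f y * h y) x u
      = h x * L u + f x * fderiv ℝ h x u := by
    intro u
    have h1 := hsd (fun _ => u) (fun y => f y • Y y) Z x
    have h2 := hsd (fun _ => u) Y Z x
    rw [hLeib f (fun _ => u) Y] at h1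
    simp only [map_smul, map_add, LinearMap.smul_apply, LinearMap.add_apply, smul_eq_mul] at h1
    have hrw : (fun y => f y * g y (Y y) (Z y)) = fun y => f y * h y := rfl
    rw [hrw] at h1
    have hd : dirD f (fun _ => u) x = L u := by
      simp [dirD, hfderiv]
    rw [hd] at h1
    rw [h1, h2]
    ring
  have hfh_nd : ¬ DifferentiableAt ℝ (fun y => f y * h y) x := by
    intro hd
    apply hnd
    have hfc : ContinuousAt f x := hfd.continuousAt
    have hne : ∀ᶠ y in nhds x, f y ≠ 0 := by
      have : ContinuousAt f x := hfc
      have h1 : (1:ℝ) ≠ 0 := one_ne_zero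
      have := this.eventually_ne (by rw [hfx]; exact h1)
      exact this
    have heq : h =ᶠ[nhds x] fun y => (f y)⁻¹ * (f y * h y) := by
      filter_upwards [hne] with y hy
      field_simp
    have : DifferentiableAt ℝ (fun y => (f y)⁻¹ * (f y * h y)) x :=
      (hfd.inv (by rw [hfx]; exact one_ne_zero)).mul hd
    exact this.congr_of_eventuallyEq heq
  have e0 := hkey u0
  rw [fderiv_zero_of_not_differentiableAt hnd, fderiv_zero_of_not_differentiableAt hfh_nd] at e0
  simp only [ContinuousLinearMap.zero_apply, mul_zero, add_zero] at e0
  have hLu0 : L u0 ≠ 0 := by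
    rw [hL]
    exact_mod_cast norm_ne_zero_iff.mpr hu0
  have : h x * L u0 = 0 := by linarith [e0]
  exact (mul_eq_zero.mp this).resolve_right hLu0

private lemma aux_keyderiv (g : E → E →ₗ[ℝ] E →ₗ[ℝ] ℝ) (η : E → E →ₗ[ℝ] ℝ)
    (D Dse : (E → E) → (E → E) → (E → E))
    (hLeib : ∀ (f : E → ℝ) (X Y), D X (fun x => f x • Y x)
      = fun x => dirD f X x • Y x + f x • D X Y x)
    (hsd : SemiDualConn g η D Dse)
    (φ ψ : E → ℝ) (hφ : Differentiable ℝ φ) (hψ : Differentiable ℝ ψ)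
    (Y Z : E → E) (x : E) (u : E) :
    fderiv ℝ (fun y => Real.exp (φ y + ψ y) * g y (Y y) (Z y)) x u
      = Real.exp (φ x + ψ x) * ((fderiv ℝ φ x u + fderiv ℝ ψ x u) * g x (Y x) (Z x)
        + fderiv ℝ (fun y => g y (Y y) (Z y)) x u) := by
  set h : E → ℝ := fun y => g y (Y y) (Z y) with hh
  have hcd : DifferentiableAt ℝ (fun y => Real.exp (φ y + ψ y)) x :=
    ((hφ x).add (hψ x)).exp
  have hcderiv : fderiv ℝ (fun y => Real.exp (φ y + ψ y)) x
      = Real.exp (φ x + ψ x) • fderiv ℝ (fun y => φ y + ψ y) x :=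
    fderiv_exp ((hφ x).add (hψ x))
  have hsumderiv : fderiv ℝ (fun y => φ y + ψ y) x = fderiv ℝ φ x + fderiv ℝ ψ x :=
    fderiv_add (hφ x) (hψ x)
  by_cases hdh : DifferentiableAt ℝ h x
  · rw [fderiv_fun_mul hcd hdh]
    simp only [ContinuousLinearMap.add_apply, ContinuousLinearMap.coe_smul',
      Pi.smul_apply, smul_eq_mul, hcderiv, hsumderiv]
    ring
  · have h0 : h x = 0 := aux_vanish g η D Dse hLeib hsd Y Z x hdh
    have hch_nd : ¬ DifferentiableAt ℝ (fun y => Real.exp (φ y + ψ y) * h y) x := by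
      intro hd
      apply hdh
      have heq : h = fun y => Real.exp (-(φ y + ψ y)) * (Real.exp (φ y + ψ y) * h y) := by
        funext y
        rw [← mul_assoc, ← Real.exp_add, neg_add_cancel, Real.exp_zero, one_mul]
      rw [hh, ← hh, heq]
      exact (((hφ x).add (hψ x)).neg.exp).mul hd
    rw [fderiv_zero_of_not_differentiableAt hdh, fderiv_zero_of_not_differentiableAt hch_nd]
    have h0' : ((g x) (Y x)) (Z x) = 0 := h0
    simp [h0']

end AuxLemmas

/-- Let `(g̃,∇̃)` be the conformal-projective transformation of
`(g,∇)` by smooth functions `φ,ψ` and let `η` be a `1`-form.  Then `(M,g,η,∇)` is a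
SWMT iff `(M,g̃,η,∇̃)` is a SWMT; moreover the semi-dual connections satisfy
`∇̃*_{(g̃,η)} = ∇*_{(g,η)} + dψ⊗I + I⊗dψ − g⊗∇φ`. -/
theorem statement5 {E : Type*} [NormedAddCommGroup E] [NormedSpace ℝ E]
    (g gt : E → E →ₗ[ℝ] E →ₗ[ℝ] ℝ) (hg : IsMetric g) (η : E → E →ₗ[ℝ] ℝ)
    (D Dt Dse Dtse : (E → E) → (E → E) → (E → E)) (hD : IsConn D)
    (φ ψ : E → ℝ) (hφ : ContDiff ℝ (⊤ : ℕ∞) φ) (hψ : ContDiff ℝ (⊤ : ℕ∞) ψ)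
    (gradφ : E → E) (hgradφ : ∀ x v, g x (gradφ x) v = fderiv ℝ φ x v)
    (gradψ : E → E) (hgradψ : ∀ x v, g x (gradψ x) v = fderiv ℝ ψ x v)
    (hgt : ∀ x u v, gt x u v = Real.exp (φ x + ψ x) * g x u v)
    (hDt : ∀ X Y x, Dt X Y x
      = D X Y x + dirD φ X x • Y x + dirD φ Y x • X x - g x (X x) (Y x) • gradψ x)
    (hsemidual : SemiDualConn g η D Dse)
    (hsemidualt : SemiDualConn gt η Dt Dtse) :
    (IsSWMT g η D ↔ IsSWMT gt η Dt) ∧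
    (∀ X Y x, Dtse X Y x
      = Dse X Y x + dirD ψ X x • Y x + dirD ψ Y x • X x - g x (X x) (Y x) • gradφ x) := by
  classical
  have hφd : Differentiable ℝ φ := hφ.differentiable (by simp)
  have hψd : Differentiable ℝ ψ := hψ.differentiable (by simp)
  have he : ∀ x : E, Real.exp (φ x + ψ x) ≠ 0 := fun x => Real.exp_ne_zero _
  have hLeib := hD.2.2.2
  have hgt_fun : ∀ Y Z : E → E, (fun y => gt y (Y y) (Z y))
      = fun y => Real.exp (φ y + ψ y) * g y (Y y) (Z y) :=
    fun Y Z => funext fun y => hgt y _ _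
  have key : ∀ (Y Z : E → E) (x u : E),
      fderiv ℝ (fun y => gt y (Y y) (Z y)) x u
        = Real.exp (φ x + ψ x) * ((fderiv ℝ φ x u + fderiv ℝ ψ x u) * g x (Y x) (Z x)
          + fderiv ℝ (fun y => g y (Y y) (Z y)) x u) := by
    intro Y Z x u
    rw [hgt_fun Y Z]
    exact aux_keyderiv g η D Dse hLeib hsemidual φ ψ hφd hψd Y Z x u
  have htors : ∀ X Y x, tors Dt X Y x = tors D X Y x := by
    intro X Y x
    simp only [tors, hDt, hg.1 x (Y x) (X x)]
    module
  have main1 : ∀ X Y Z x, covg gt Dt X Y Z x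
      = Real.exp (φ x + ψ x) * (covg g D X Y Z x
        + (fderiv ℝ ψ x (X x) - fderiv ℝ φ x (X x)) * g x (Y x) (Z x)
        + (fderiv ℝ ψ x (Y x) - fderiv ℝ φ x (Y x)) * g x (X x) (Z x)
        + (fderiv ℝ ψ x (Z x) - fderiv ℝ φ x (Z x)) * g x (X x) (Y x)) := by
    intro X Y Z x
    have hgψZ : g x (gradψ x) (Z x) = fderiv ℝ ψ x (Z x) := hgradψ x (Z x)
    have hgψY : g x (Y x) (gradψ x) = fderiv ℝ ψ x (Y x) := by
      rw [hg.1]; exact hgradψ x (Y x)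
    have hsymYX : g x (Y x) (X x) = g x (X x) (Y x) := hg.1 x (Y x) (X x)
    simp only [covg, hgt, hDt, dirD, map_add, map_sub, map_smul,
      LinearMap.add_apply, LinearMap.sub_apply, LinearMap.smul_apply, smul_eq_mul]
    rw [aux_keyderiv g η D Dse hLeib hsemidual φ ψ hφd hψd Y Z x (X x)]
    rw [hgψZ, hgψY, hsymYX]
    ring
  constructor
  · constructor
    · intro H X Y Z x
      have hb := H X Y Z x
      have hsym : g x (X x) (Y x) = g x (Y x) (X x) := hg.1 x (X x) (Y x)
      rw [main1 X Y Z x, main1 Y X Z x, htors X Y x, hgt, hgt, hgt]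
      linear_combination Real.exp (φ x + ψ x) * hb
        + Real.exp (φ x + ψ x) * (fderiv ℝ ψ x (Z x) - fderiv ℝ φ x (Z x)) * hsym
    · intro H X Y Z x
      have h' := H X Y Z x
      rw [main1 X Y Z x, main1 Y X Z x, htors X Y x, hgt, hgt, hgt] at h'
      have hsym : g x (X x) (Y x) = g x (Y x) (X x) := hg.1 x (X x) (Y x)
      have hc : Real.exp (φ x + ψ x)
          * (covg g D X Y Z x + η x (X x) * g x (Y x) (Z x))
          = Real.exp (φ x + ψ x)
          * (covg g D Y X Z x + η x (Y x) * g x (X x) (Z x)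
            - g x (tors D X Y x) (Z x)) := by
        linear_combination h'
          - Real.exp (φ x + ψ x) * (fderiv ℝ ψ x (Z x) - fderiv ℝ φ x (Z x)) * hsym
      exact mul_left_cancel₀ (he x) hc
  · intro X Y x
    have hmain : ∀ v : E, g x v (Dtse X Y x)
        = g x v (Dse X Y x + dirD ψ X x • Y x + dirD ψ Y x • X x
          - g x (X x) (Y x) • gradφ x) := by
      intro v
      have h1 := hsemidualt X (fun _ => v) Y x
      have h2 := hsemidual X (fun _ => v) Y x
      rw [hgt_fun (fun _ => v) Y] at h1
      rw [aux_keyderiv g η D Dse hLeib hsemidual φ ψ hφd hψd (fun _ => v) Y x (X x)] at h1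
      rw [h2] at h1
      rw [hgt, hgt, hgt, hDt] at h1
      have hgφv : g x v (gradφ x) = fderiv ℝ φ x v := by
        rw [hg.1]; exact hgradφ x v
      have hgψY : g x (gradψ x) (Y x) = fderiv ℝ ψ x (Y x) := hgradψ x (Y x)
      have hgφvX : g x (gradφ x) v = fderiv ℝ φ x v := hgradφ x v
      have hsymvX : g x v (X x) = g x (X x) v := hg.1 x v (X x)
      have hc : Real.exp (φ x + ψ x) * (g x v (Dtse X Y x))
          = Real.exp (φ x + ψ x) * (g x v (Dse X Y x)
            + fderiv ℝ ψ x (X x) * g x v (Y x)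
            + fderiv ℝ ψ x (Y x) * g x v (X x)
            - g x (X x) (Y x) * fderiv ℝ φ x v) := by
        simp only [map_add, map_sub, map_smul, LinearMap.add_apply, LinearMap.sub_apply,
          LinearMap.smul_apply, smul_eq_mul, dirD] at h1 ⊢
        linear_combination -h1 - Real.exp (φ x + ψ x) * fderiv ℝ ψ x (Y x) * hsymvX
          + Real.exp (φ x + ψ x) * ((g x) (X x)) v * hgψY
      have hce := mul_left_cancel₀ (he x) hc
      simp only [map_add, map_sub, map_smul, smul_eq_mul, dirD, hgφv]
      linarith [hce]
    have hz : ∀ v : E, g x (Dtse X Y x - (Dse X Y x + dirD ψ X x • Y x + dirD ψ Y x • X x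
        - g x (X x) (Y x) • gradφ x)) v = 0 := by
      intro v
      rw [hg.1, map_sub, hmain v, sub_self]
    have := hg.2 x _ hz
    exact sub_eq_zero.mp this
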